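/- Let n ≥ 2. There exist absolute constants c, C > 0 such that for all 0 < σ < 1/2 and all 0 < δ < 1 with 2δ^{1-σ} ≤ 1 and δ^{1-σ} ≤ 1/40, and every (x,t) ∈ Λ, one has c^{n-1} δ^{(n-1)(1-σ)} ≤ |u(x,t)| ≤ C^{n-1} δ^{(n-1)(1-σ)}. -/

import Mathlib

open Real MeasureTheory

/-- The function `g = ∑_{ℓ ∈ ℕ, 1 ≤ ℓ ≤ δ^{-σ}} χ_{(ℓδ^σ-δ, ℓδ^σ+δ)}` from Section 2. -/
noncomputable def g (δ σ : ℝ) (x : ℝ) : ℝ :=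
  ∑ ℓ ∈ Finset.Icc 1 ⌊δ ^ (-σ)⌋₊,
    Set.indicator (Set.Ioo ((ℓ : ℝ) * δ ^ σ - δ) ((ℓ : ℝ) * δ ^ σ + δ)) (fun _ => (1 : ℝ)) x

/-- The solution `u(x,t) = ∫_{ℝ^{n-1}} e^{-πit|ξ|² + 2πi x·ξ} ∏_j g(ξ_j) dξ` of the free
Schrödinger equation with Fourier data `F(ξ) = ∏_j g(ξ_j)`. -/
noncomputable def schrodingerSol (n : ℕ) (δ σ : ℝ)
    (x : EuclideanSpace ℝ (Fin (n-1))) (t : ℝ) : ℂ :=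
  ∫ ξ : EuclideanSpace ℝ (Fin (n-1)),
    Complex.exp (((-(π * t * ‖ξ‖ ^ 2) + 2 * π * (inner ℝ x ξ : ℝ) : ℝ) : ℂ) * Complex.I)
      * ((∏ j, g δ σ (ξ j) : ℝ) : ℂ)

lemma cos_lb (σ δ : ℝ) (hδ0 : 0 < δ) (hδ1 : δ < 1)
    (p q ℓ : ℕ) (hp : (p : ℝ) ≤ (1/40) * δ ^ (σ - 1))
    (hq : (q : ℝ) ≤ (1/80) * δ ^ (2*σ - 1)) (hℓ : (ℓ : ℝ) ≤ δ ^ (-σ))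
    (s : ℝ) (hs : s ∈ Set.Ioo ((ℓ : ℝ) * δ ^ σ - δ) ((ℓ : ℝ) * δ ^ σ + δ)) :
    1/2 ≤ Real.cos (-(π * (2 * (q : ℝ) * δ ^ (-(2*σ))) * s ^ 2)
      + 2 * π * (((p : ℝ) * δ ^ (-σ)) * s)) := by
  have hA : (0:ℝ) < δ ^ σ := Real.rpow_pos_of_pos hδ0 _
  set A : ℝ := δ ^ σ with hAdef
  set B : ℝ := δ ^ (-σ) with hBdef
  have hB : 0 < B := Real.rpow_pos_of_pos hδ0 _
  have hAB : A * B = 1 := by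
    rw [hAdef, hBdef, ← Real.rpow_add hδ0]; simp
  have h2σ : δ ^ (-(2*σ)) = B ^ 2 := by
    rw [hBdef, ← Real.rpow_natCast (δ ^ (-σ)) 2, ← Real.rpow_mul hδ0.le]
    norm_num; ring_nf
  have hσ1 : δ ^ (σ - 1) = A / δ := by
    rw [hAdef, Real.rpow_sub hδ0, Real.rpow_one]
  have h2σ1 : δ ^ (2*σ - 1) = A ^ 2 / δ := by
    rw [Real.rpow_sub hδ0, Real.rpow_one, ← Real.rpow_natCast (δ ^ σ) 2,
      ← Real.rpow_mul hδ0.le]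
    norm_num; ring_nf
  clear_value A B
  have hpA : (p : ℝ) * δ ≤ (1/40) * A := by
    rw [hσ1] at hp
    calc (p : ℝ) * δ ≤ ((1/40) * (A / δ)) * δ := mul_le_mul_of_nonneg_right hp hδ0.le
      _ = (1/40) * A := by field_simp
  have hqA : (q : ℝ) * δ ≤ (1/80) * A ^ 2 := by
    rw [h2σ1] at hq
    calc (q : ℝ) * δ ≤ ((1/80) * (A ^ 2 / δ)) * δ := mul_le_mul_of_nonneg_right hq hδ0.le
      _ = (1/80) * A ^ 2 := by field_simp
  have h1 : (p : ℝ) * δ * B ≤ 1/40 := by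
    calc (p : ℝ) * δ * B ≤ ((1/40) * A) * B := mul_le_mul_of_nonneg_right hpA hB.le
      _ = (1/40) * (A * B) := by ring
      _ = 1/40 := by rw [hAB]; norm_num
  have h2 : (q : ℝ) * δ * B ^ 2 ≤ 1/80 := by
    calc (q : ℝ) * δ * B ^ 2 ≤ ((1/80) * A ^ 2) * B ^ 2 :=
          mul_le_mul_of_nonneg_right hqA (by positivity)
      _ = (1/80) * (A * B) ^ 2 := by ring
      _ = 1/80 := by rw [hAB]; norm_num
  set u : ℝ := s - (ℓ : ℝ) * A with hudef
  clear_value u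
  have hu : |u| ≤ δ := by
    rw [abs_le]; obtain ⟨h₁, h₂⟩ := hs; constructor <;> [linarith; linarith]
  have hA2B2 : A ^ 2 * B ^ 2 = 1 := by rw [← mul_pow, hAB]; norm_num
  have key : -(π * (2 * (q : ℝ) * δ ^ (-(2*σ))) * s ^ 2) + 2 * π * (((p : ℝ) * B) * s)
      = (2*π*(p:ℝ)*B*u - 4*π*(q:ℝ)*(ℓ:ℝ)*B*u - 2*π*(q:ℝ)*B^2*u^2)
        + (((p:ℤ) * ℓ - q * ℓ^2 : ℤ) : ℝ) * (2 * π) := by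
    have hs' : s = (ℓ : ℝ) * A + u := by rw [hudef]; ring
    rw [h2σ, hs']
    push_cast
    linear_combination (-(2*π*(q:ℝ)*(ℓ:ℝ)^2)) * hA2B2
      + (2*π*(p:ℝ)*(ℓ:ℝ) - 4*π*(q:ℝ)*(ℓ:ℝ)*B*u) * hAB
  rw [key, Real.cos_add_int_mul_two_pi]
  set ψ : ℝ := 2*π*(p:ℝ)*B*u - 4*π*(q:ℝ)*(ℓ:ℝ)*B*u - 2*π*(q:ℝ)*B^2*u^2 with hψdef
  clear_value ψ
  have hπ : (0:ℝ) < π := Real.pi_pos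
  have hX1 : (p:ℝ)*B*|u| ≤ 1/40 := by
    calc (p:ℝ)*B*|u| ≤ (p:ℝ)*B*δ := mul_le_mul_of_nonneg_left hu (by positivity)
      _ = (p:ℝ)*δ*B := by ring
      _ ≤ 1/40 := h1
  have hX2 : (q:ℝ)*(ℓ:ℝ)*B*|u| ≤ 1/80 := by
    calc (q:ℝ)*(ℓ:ℝ)*B*|u| ≤ (q:ℝ)*B*B*δ := by
          gcongr <;> first | exact hℓ | exact hu | positivity
      _ = (q:ℝ)*δ*B^2 := by ring
      _ ≤ 1/80 := h2
  have hX3 : (q:ℝ)*B^2*u^2 ≤ 1/80 := by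
    have hu2 : u^2 ≤ δ^2 := by
      rw [← sq_abs]; nlinarith [abs_nonneg u]
    calc (q:ℝ)*B^2*u^2 ≤ (q:ℝ)*B^2*δ^2 := mul_le_mul_of_nonneg_left hu2 (by positivity)
      _ = ((q:ℝ)*δ*B^2)*δ := by ring
      _ ≤ (1/80)*1 := mul_le_mul h2 hδ1.le hδ0.le (by norm_num)
      _ = 1/80 := by norm_num
  have e1 : |2*π*(p:ℝ)*B*u| = 2*π*((p:ℝ)*B*|u|) := by
    rw [abs_mul, abs_of_nonneg (show (0:ℝ) ≤ 2*π*(p:ℝ)*B by positivity)]; ring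
  have e2 : |4*π*(q:ℝ)*(ℓ:ℝ)*B*u| = 4*π*((q:ℝ)*(ℓ:ℝ)*B*|u|) := by
    rw [abs_mul, abs_of_nonneg (show (0:ℝ) ≤ 4*π*(q:ℝ)*(ℓ:ℝ)*B by positivity)]; ring
  have e3 : |2*π*(q:ℝ)*B^2*u^2| = 2*π*((q:ℝ)*B^2*u^2) := by
    rw [abs_of_nonneg (by positivity)]; ring
  have hψle : |ψ| ≤ π/8 := by
    have t1 := abs_sub (2*π*(p:ℝ)*B*u - 4*π*(q:ℝ)*(ℓ:ℝ)*B*u) (2*π*(q:ℝ)*B^2*u^2)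
    have t2 := abs_sub (2*π*(p:ℝ)*B*u) (4*π*(q:ℝ)*(ℓ:ℝ)*B*u)
    rw [e3] at t1
    rw [e1, e2] at t2
    have b1 : 2*π*((p:ℝ)*B*|u|) ≤ 2*π*(1/40) :=
      mul_le_mul_of_nonneg_left hX1 (by positivity)
    have b2 : 4*π*((q:ℝ)*(ℓ:ℝ)*B*|u|) ≤ 4*π*(1/80) :=
      mul_le_mul_of_nonneg_left hX2 (by positivity)
    have b3 : 2*π*((q:ℝ)*B^2*u^2) ≤ 2*π*(1/80) :=
      mul_le_mul_of_nonneg_left hX3 (by positivity)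
    rw [hψdef]
    linarith
  have hcos := Real.one_sub_sq_div_two_le_cos (x := ψ)
  have hψsq : ψ^2 ≤ (π/8)^2 := by
    rw [← sq_abs]; exact pow_le_pow_left₀ (abs_nonneg ψ) hψle 2
  have hπ4 : π ≤ 4 := Real.pi_le_four
  have hππ : π * π ≤ 16 := by
    have := mul_self_le_mul_self hπ.le hπ4; linarith
  have hsq : ψ^2 ≤ 1/4 := by
    have h2 : (π/8)^2 = (π*π)/64 := by ring
    rw [h2] at hψsq; linarith
  linarith

noncomputable def oneInt (σ δ a t : ℝ) : ℂ :=
  ∫ s : ℝ, Complex.exp (((-(π * t * s ^ 2) + 2 * π * (a * s) : ℝ) : ℂ) * Complex.I)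
    * ((g δ σ s : ℝ) : ℂ)

lemma econt (a t : ℝ) : Continuous (fun s : ℝ =>
    Complex.exp (((-(π * t * s ^ 2) + 2 * π * (a * s) : ℝ) : ℂ) * Complex.I)) := by
  fun_prop

lemma eint (a t c d : ℝ) : IntegrableOn (fun s : ℝ =>
    Complex.exp (((-(π * t * s ^ 2) + 2 * π * (a * s) : ℝ) : ℂ) * Complex.I))
    (Set.Ioo c d) := by
  exact ((econt a t).integrableOn_Icc).mono_set Set.Ioo_subset_Icc_self

lemma oneInt_eq_sum (σ δ a t : ℝ) : oneInt σ δ a t =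
    ∑ ℓ ∈ Finset.Icc 1 ⌊δ ^ (-σ)⌋₊,
      ∫ s in Set.Ioo ((ℓ : ℝ) * δ ^ σ - δ) ((ℓ : ℝ) * δ ^ σ + δ),
        Complex.exp (((-(π * t * s ^ 2) + 2 * π * (a * s) : ℝ) : ℂ) * Complex.I) := by
  have hpt : ∀ s : ℝ,
      Complex.exp (((-(π * t * s ^ 2) + 2 * π * (a * s) : ℝ) : ℂ) * Complex.I)
        * ((g δ σ s : ℝ) : ℂ)
      = ∑ ℓ ∈ Finset.Icc 1 ⌊δ ^ (-σ)⌋₊,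
          Set.indicator (Set.Ioo ((ℓ : ℝ) * δ ^ σ - δ) ((ℓ : ℝ) * δ ^ σ + δ))
            (fun s => Complex.exp (((-(π * t * s ^ 2) + 2 * π * (a * s) : ℝ) : ℂ)
              * Complex.I)) s := by
    intro s
    rw [g, Complex.ofReal_sum, Finset.mul_sum]
    refine Finset.sum_congr rfl fun ℓ _ => ?_
    by_cases h : s ∈ Set.Ioo ((ℓ : ℝ) * δ ^ σ - δ) ((ℓ : ℝ) * δ ^ σ + δ)
    · simp [Set.indicator_of_mem h]
    · simp [Set.indicator_of_notMem h]
  rw [oneInt]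
  simp_rw [hpt]
  rw [integral_finset_sum _ (fun ℓ _ => (eint a t _ _).integrable_indicator measurableSet_Ioo)]
  exact Finset.sum_congr rfl fun ℓ _ => integral_indicator measurableSet_Ioo

lemma floor_facts (σ δ : ℝ) (hσ0 : 0 < σ) (hδ0 : 0 < δ) (hδ1 : δ < 1) :
    (1 ≤ ⌊δ ^ (-σ)⌋₊) ∧ δ ^ (-σ) / 2 ≤ (⌊δ ^ (-σ)⌋₊ : ℝ) ∧ ((⌊δ ^ (-σ)⌋₊ : ℝ)) ≤ δ ^ (-σ) := by
  have hB : (0:ℝ) < δ ^ (-σ) := Real.rpow_pos_of_pos hδ0 _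
  have hB1 : (1:ℝ) < δ ^ (-σ) :=
    Real.one_lt_rpow_of_pos_of_lt_one_of_neg hδ0 hδ1 (by linarith)
  have h1 : 1 ≤ ⌊δ ^ (-σ)⌋₊ := Nat.le_floor (by exact_mod_cast hB1.le)
  have hflt : δ ^ (-σ) - 1 < (⌊δ ^ (-σ)⌋₊ : ℝ) := Nat.sub_one_lt_floor _
  have hfle : ((⌊δ ^ (-σ)⌋₊ : ℝ)) ≤ δ ^ (-σ) := Nat.floor_le hB.le
  refine ⟨h1, ?_, hfle⟩
  have h1' : (1:ℝ) ≤ (⌊δ ^ (-σ)⌋₊ : ℝ) := by exact_mod_cast h1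
  rcases le_or_gt (δ ^ (-σ)) 2 with h | h
  · linarith
  · linarith

lemma oneInt_bounds (σ δ : ℝ) (hσ0 : 0 < σ) (hδ0 : 0 < δ) (hδ1 : δ < 1)
    (p q : ℕ) (hp : (p : ℝ) ≤ (1/40) * δ ^ (σ - 1))
    (hq : (q : ℝ) ≤ (1/80) * δ ^ (2*σ - 1)) :
    (1/2) * δ ^ (1-σ) ≤
      ‖oneInt σ δ ((p : ℝ) * δ ^ (-σ)) (2 * (q : ℝ) * δ ^ (-(2*σ)))‖ ∧
      ‖oneInt σ δ ((p : ℝ) * δ ^ (-σ)) (2 * (q : ℝ) * δ ^ (-(2*σ)))‖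
        ≤ 2 * δ ^ (1-σ) := by
  set a : ℝ := (p : ℝ) * δ ^ (-σ) with hadef
  set t : ℝ := 2 * (q : ℝ) * δ ^ (-(2*σ)) with htdef
  set N : ℕ := ⌊δ ^ (-σ)⌋₊ with hNdef
  obtain ⟨hN1, hNl, hNu⟩ := floor_facts σ δ hσ0 hδ0 hδ1
  have hsplit : δ ^ (1-σ) = δ ^ (-σ) * δ := by
    rw [show (1-σ) = -σ+1 by ring, Real.rpow_add hδ0, Real.rpow_one]
  have hvol : ∀ ℓ : ℕ, (volume (Set.Ioo ((ℓ : ℝ) * δ ^ σ - δ) ((ℓ : ℝ) * δ ^ σ + δ))).toReal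
      = 2 * δ := by
    intro ℓ
    rw [Real.volume_Ioo, ENNReal.toReal_ofReal (by linarith)]
    ring
  rw [oneInt_eq_sum]
  constructor
  · -- lower bound via real part
    have hre : ∀ ℓ : ℕ, ℓ ∈ Finset.Icc 1 N → δ ≤
        (∫ s in Set.Ioo ((ℓ : ℝ) * δ ^ σ - δ) ((ℓ : ℝ) * δ ^ σ + δ),
          Complex.exp (((-(π * t * s ^ 2) + 2 * π * (a * s) : ℝ) : ℂ) * Complex.I)).re := by
      intro ℓ hℓ
      rw [show (∫ s in Set.Ioo ((ℓ : ℝ) * δ ^ σ - δ) ((ℓ : ℝ) * δ ^ σ + δ),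
          Complex.exp (((-(π * t * s ^ 2) + 2 * π * (a * s) : ℝ) : ℂ) * Complex.I)).re
        = RCLike.re (∫ s in Set.Ioo ((ℓ : ℝ) * δ ^ σ - δ) ((ℓ : ℝ) * δ ^ σ + δ),
          Complex.exp (((-(π * t * s ^ 2) + 2 * π * (a * s) : ℝ) : ℂ) * Complex.I)) from rfl,
        ← integral_re (eint a t _ _)]
      simp only [RCLike.re_to_complex, Complex.exp_ofReal_mul_I_re]
      have hc : ∀ s ∈ Set.Ioo ((ℓ : ℝ) * δ ^ σ - δ) ((ℓ : ℝ) * δ ^ σ + δ),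
          (1:ℝ)/2 ≤ Real.cos (-(π * t * s ^ 2) + 2 * π * (a * s)) := by
        intro s hs
        have hℓ' : (ℓ : ℝ) ≤ δ ^ (-σ) := by
          have := (Finset.mem_Icc.mp hℓ).2
          calc (ℓ : ℝ) ≤ (N : ℝ) := by exact_mod_cast this
            _ ≤ δ ^ (-σ) := hNu
        have := cos_lb σ δ hδ0 hδ1 p q ℓ hp hq hℓ' s hs
        calc (1:ℝ)/2 ≤ Real.cos (-(π * (2 * (q : ℝ) * δ ^ (-(2*σ))) * s ^ 2)
              + 2 * π * (((p : ℝ) * δ ^ (-σ)) * s)) := this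
          _ = Real.cos (-(π * t * s ^ 2) + 2 * π * (a * s)) := by rw [← htdef, ← hadef]
      have hint : IntegrableOn (fun s : ℝ => Real.cos (-(π * t * s ^ 2) + 2 * π * (a * s)))
          (Set.Ioo ((ℓ : ℝ) * δ ^ σ - δ) ((ℓ : ℝ) * δ ^ σ + δ)) := by
        apply Continuous.integrableOn_Icc (by fun_prop) |>.mono_set Set.Ioo_subset_Icc_self
      have := setIntegral_ge_of_const_le (μ := volume) measurableSet_Ioo
        (by simp [Real.volume_Ioo]) hc hint
      rw [measureReal_def, hvol ℓ, smul_eq_mul] at this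
      linarith
    have hresum : (N : ℝ) * δ ≤ (∑ ℓ ∈ Finset.Icc 1 N,
        ∫ s in Set.Ioo ((ℓ : ℝ) * δ ^ σ - δ) ((ℓ : ℝ) * δ ^ σ + δ),
          Complex.exp (((-(π * t * s ^ 2) + 2 * π * (a * s) : ℝ) : ℂ) * Complex.I)).re := by
      rw [Complex.re_sum]
      calc (N : ℝ) * δ = ∑ _ℓ ∈ Finset.Icc 1 N, δ := by
            rw [Finset.sum_const, Nat.card_Icc]; simp [nsmul_eq_mul]
        _ ≤ _ := Finset.sum_le_sum hre
    calc (1/2) * δ ^ (1-σ) = (δ ^ (-σ) / 2) * δ := by rw [hsplit]; ring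
      _ ≤ (N : ℝ) * δ := mul_le_mul_of_nonneg_right hNl hδ0.le
      _ ≤ _ := hresum.trans (Complex.re_le_norm _)
  · -- upper bound
    have habs : ∀ ℓ : ℕ, ℓ ∈ Finset.Icc 1 N →
        ‖∫ s in Set.Ioo ((ℓ : ℝ) * δ ^ σ - δ) ((ℓ : ℝ) * δ ^ σ + δ),
          Complex.exp (((-(π * t * s ^ 2) + 2 * π * (a * s) : ℝ) : ℂ) * Complex.I)‖
          ≤ 2 * δ := by
      intro ℓ _
      refine (norm_integral_le_integral_norm _).trans ?_
      simp only [Complex.norm_exp_ofReal_mul_I]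
      rw [setIntegral_const, measureReal_def, hvol ℓ, smul_eq_mul, mul_one]
    calc ‖∑ ℓ ∈ Finset.Icc 1 N, _‖ ≤ ∑ ℓ ∈ Finset.Icc 1 N,
          ‖∫ s in Set.Ioo ((ℓ : ℝ) * δ ^ σ - δ) ((ℓ : ℝ) * δ ^ σ + δ),
            Complex.exp (((-(π * t * s ^ 2) + 2 * π * (a * s) : ℝ) : ℂ) * Complex.I)‖ :=
        norm_sum_le _ _
      _ ≤ ∑ _ℓ ∈ Finset.Icc 1 N, 2 * δ := Finset.sum_le_sum habs
      _ = (N : ℝ) * (2 * δ) := by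
          rw [Finset.sum_const, Nat.card_Icc]; simp [nsmul_eq_mul]
      _ ≤ δ ^ (-σ) * (2 * δ) := by
          apply mul_le_mul_of_nonneg_right hNu (by positivity)
      _ = 2 * δ ^ (1-σ) := by rw [hsplit]; ring

lemma sol_eq_prod (n : ℕ) (δ σ : ℝ) (x : EuclideanSpace ℝ (Fin (n-1))) (t : ℝ) :
    schrodingerSol n δ σ x t = ∏ j, oneInt σ δ (x j) t := by
  rw [schrodingerSol]
  have hmp := (EuclideanSpace.volume_preserving_symm_measurableEquiv_toLp (Fin (n-1))).symm
  rw [← hmp.integral_comp (MeasurableEquiv.measurableEmbedding _)]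
  have hpt : ∀ y : Fin (n-1) → ℝ,
      Complex.exp (((-(π * t * ‖(MeasurableEquiv.toLp 2 (Fin (n-1) → ℝ)).symm.symm y‖ ^ 2)
          + 2 * π * (inner ℝ x ((MeasurableEquiv.toLp 2 (Fin (n-1) → ℝ)).symm.symm y) : ℝ) : ℝ) : ℂ)
          * Complex.I)
        * ((∏ j, g δ σ (((MeasurableEquiv.toLp 2 (Fin (n-1) → ℝ)).symm.symm y) j) : ℝ) : ℂ)
      = ∏ j, (Complex.exp (((-(π * t * (y j) ^ 2) + 2 * π * (x j * y j) : ℝ) : ℂ) * Complex.I)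
          * ((g δ σ (y j) : ℝ) : ℂ)) := by
    intro y
    have hcoord : ∀ j, ((MeasurableEquiv.toLp 2 (Fin (n-1) → ℝ)).symm.symm y) j = y j :=
      fun j => rfl
    have hnorm : ‖(MeasurableEquiv.toLp 2 (Fin (n-1) → ℝ)).symm.symm y‖ ^ 2
        = ∑ j, (y j) ^ 2 := by
      rw [EuclideanSpace.norm_eq, Real.sq_sqrt (Finset.sum_nonneg fun i _ => by positivity)]
      simp [hcoord, sq_abs]
    have hinner : (inner ℝ x ((MeasurableEquiv.toLp 2 (Fin (n-1) → ℝ)).symm.symm y) : ℝ)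
        = ∑ j, x j * y j := by
      simp [PiLp.inner_apply, RCLike.inner_apply, conj_trivial, hcoord]
      exact Finset.sum_congr rfl fun j _ => mul_comm _ _
    simp only [hcoord, hnorm, hinner]
    have hsum : (-(π * t * ∑ j, (y j) ^ 2) + 2 * π * (∑ j, x j * y j))
        = ∑ j, (-(π * t * (y j) ^ 2) + 2 * π * (x j * y j)) := by
      rw [Finset.mul_sum, Finset.mul_sum, ← Finset.sum_neg_distrib, ← Finset.sum_add_distrib]
    rw [hsum, Complex.ofReal_sum, Finset.sum_mul, Complex.exp_sum, Complex.ofReal_prod,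
      ← Finset.prod_mul_distrib]
  simp_rw [hpt]
  rw [MeasureTheory.volume_pi, MeasureTheory.integral_fintype_prod_eq_prod (ι := Fin (n-1))
    (f := fun j s => Complex.exp (((-(π * t * s ^ 2) + 2 * π * (x j * s) : ℝ) : ℂ)
      * Complex.I) * ((g δ σ s : ℝ) : ℂ))]
  rfl

/-- There are absolute constants `c, C > 0` such that for all `n ≥ 2`,
admissible `σ, δ` and every `(x,t) ∈ Λ`,
`c^{n-1} δ^{(n-1)(1-σ)} ≤ |u(x,t)| ≤ C^{n-1} δ^{(n-1)(1-σ)}`. -/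
theorem stmt4 :
    ∃ c C : ℝ, 0 < c ∧ 0 < C ∧
      ∀ n : ℕ, 2 ≤ n →
      ∀ σ δ : ℝ, 0 < σ → σ < 1/2 → 0 < δ → δ < 1 →
        2 * δ ^ (1 - σ) ≤ 1 → δ ^ (1 - σ) ≤ 1/40 →
        ∀ x : EuclideanSpace ℝ (Fin (n-1)), ∀ t : ℝ,
          (∀ j, ∃ p : ℕ, (p : ℝ) ≤ (1/40) * δ ^ (σ - 1) ∧ x j = (p : ℝ) * δ ^ (-σ)) →
          (∃ q : ℕ, (q : ℝ) ≤ (1/80) * δ ^ (2*σ - 1) ∧ t = 2 * (q : ℝ) * δ ^ (-(2*σ))) →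
          c ^ (n-1) * δ ^ (((n : ℝ) - 1) * (1 - σ)) ≤ ‖schrodingerSol n δ σ x t‖ ∧
          ‖schrodingerSol n δ σ x t‖ ≤ C ^ (n-1) * δ ^ (((n : ℝ) - 1) * (1 - σ)) := by
  refine ⟨1/2, 2, by norm_num, by norm_num, ?_⟩
  intro n hn σ δ hσ0 hσh hδ0 hδ1 h2 h40 x t hx ht
  obtain ⟨q, hq, htq⟩ := ht
  choose p hp hxp using hx
  have hD : (0:ℝ) < δ ^ (1-σ) := Real.rpow_pos_of_pos hδ0 _
  have habs : ‖schrodingerSol n δ σ x t‖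
      = ∏ j, ‖oneInt σ δ (x j) t‖ := by
    rw [sol_eq_prod]; exact norm_prod _ _
  have hb : ∀ j, (1/2) * δ ^ (1-σ) ≤ ‖oneInt σ δ (x j) t‖ ∧
      ‖oneInt σ δ (x j) t‖ ≤ 2 * δ ^ (1-σ) := by
    intro j
    rw [hxp j, htq]
    exact oneInt_bounds σ δ hσ0 hδ0 hδ1 (p j) q (hp j) hq
  have hpow : δ ^ (((n : ℝ) - 1) * (1 - σ)) = (δ ^ (1-σ)) ^ (n-1) := by
    have h1 : ((n:ℝ) - 1) = ((n-1 : ℕ) : ℝ) := by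
      rw [Nat.cast_sub (by omega : 1 ≤ n)]; norm_num
    rw [h1, mul_comm, Real.rpow_mul hδ0.le, Real.rpow_natCast]
  have hcard : (Finset.univ : Finset (Fin (n-1))).card = n - 1 := by
    rw [Finset.card_univ, Fintype.card_fin]
  rw [habs, hpow]
  constructor
  · have hlow := Finset.prod_le_prod (s := Finset.univ)
      (f := fun _ : Fin (n-1) => (1/2) * δ ^ (1-σ))
      (g := fun j => ‖oneInt σ δ (x j) t‖)
      (fun j _ => by positivity) (fun j _ => (hb j).1)
    rw [Finset.prod_const, hcard] at hlow
    calc (1/2 : ℝ) ^ (n-1) * (δ ^ (1-σ)) ^ (n-1) = ((1/2) * δ ^ (1-σ)) ^ (n-1) :=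
          (mul_pow _ _ _).symm
      _ ≤ _ := hlow
  · have hup := Finset.prod_le_prod (s := Finset.univ)
      (f := fun j => ‖oneInt σ δ (x j) t‖)
      (g := fun _ : Fin (n-1) => 2 * δ ^ (1-σ))
      (fun j _ => norm_nonneg _) (fun j _ => (hb j).2)
    rw [Finset.prod_const, hcard] at hup
    calc _ ≤ ((2:ℝ) * δ ^ (1-σ)) ^ (n-1) := hup
      _ = (2:ℝ) ^ (n-1) * (δ ^ (1-σ)) ^ (n-1) := mul_pow _ _ _
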